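/- The folded hypercube FQ_n is bipartite if and only if n is odd. -/

import Mathlib

def Q (n : ℕ) : SimpleGraph (Fin n → ZMod 2) :=
  SimpleGraph.fromRel (fun u v => hammingDist u v = 1)

def FQ (n : ℕ) : SimpleGraph (Fin n → ZMod 2) :=
  SimpleGraph.fromRel (fun u v => hammingDist u v = 1 ∨ hammingDist u v = n)

lemma sum_sub_eq_hamming {n : ℕ} (u v : Fin n → ZMod 2) :
    (∑ i, u i) - (∑ i, v i) = (hammingDist u v : ZMod 2) := by
  have key : ∀ a b : ZMod 2, a - b = if a ≠ b then 1 else 0 := by decide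
  rw [← Finset.sum_sub_distrib]
  rw [hammingDist]
  rw [Finset.card_filter]
  push_cast
  exact Finset.sum_congr rfl fun i _ => key (u i) (v i)

/-- path vertices: first k coordinates are 1 -/
def pv (n k : ℕ) : Fin n → ZMod 2 := fun i => if (i : ℕ) < k then 1 else 0

lemma pv_step {n k : ℕ} (hk : k < n) : hammingDist (pv n k) (pv n (k + 1)) = 1 := by
  rw [hammingDist]
  rw [show (1 : ℕ) = ({⟨k, hk⟩} : Finset (Fin n)).card from rfl]
  congr 1
  ext i
  simp only [Finset.mem_filter, Finset.mem_univ, true_and, Finset.mem_singleton, pv]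
  constructor
  · intro h
    apply Fin.ext
    by_contra hne
    have hik : (i : ℕ) ≠ k := hne
    have heq : ((i : ℕ) < k) ↔ ((i : ℕ) < k + 1) := by omega
    have h2 : (if (i : ℕ) < k then (1 : ZMod 2) else 0) ≠ if (i : ℕ) < k + 1 then 1 else 0 := by
      simpa using h
    simp only [heq] at h2
    exact h2 rfl
  · rintro rfl
    simp

lemma pv_diag {n : ℕ} : hammingDist (pv n 0) (pv n n) = n := by
  rw [hammingDist]
  have : ∀ i : Fin n, pv n 0 i ≠ pv n n i := by
    intro i
    simp [pv, i.isLt]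
  rw [Finset.filter_true_of_mem (fun i _ => this i), Finset.card_univ, Fintype.card_fin]

/-- FQ_n is bipartite if and only if n is odd. -/
theorem folded_hypercube_bipartite_iff (n : ℕ) (hn : 1 ≤ n) :
    (FQ n).Colorable 2 ↔ Odd n := by
  constructor
  · rintro ⟨C⟩
    by_contra hodd
    rw [Nat.not_odd_iff_even] at hodd
    -- color alternates along path
    have flip : ∀ a b c : Fin 2, a ≠ b → (b = c ↔ ¬a = c) := by decide
    have step : ∀ k, k < n → C (pv n k) ≠ C (pv n (k + 1)) := by
      intro k hk
      apply C.valid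
      rw [FQ, SimpleGraph.fromRel_adj]
      refine ⟨?_, Or.inl (Or.inl (pv_step hk))⟩
      intro h
      have := pv_step hk
      rw [h, hammingDist_self] at this
      exact absurd this (by norm_num)
    have alt : ∀ k, k ≤ n → (C (pv n k) = C (pv n 0) ↔ Even k) := by
      intro k
      induction k with
      | zero => simp
      | succ k ih =>
        intro hk
        have hkn : k < n := hk
        rw [flip (C (pv n k)) (C (pv n (k + 1))) (C (pv n 0)) (step k hkn),
          ih (le_of_lt hkn)]
        simp [Nat.even_add_one]
    have heq : C (pv n n) = C (pv n 0) := (alt n le_rfl).2 hodd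
    have hne : C (pv n 0) ≠ C (pv n n) := by
      apply C.valid
      rw [FQ, SimpleGraph.fromRel_adj]
      refine ⟨?_, Or.inl (Or.inr pv_diag)⟩
      intro h
      have := pv_diag (n := n)
      rw [h, hammingDist_self] at this
      omega
    exact hne heq.symm
  · intro hodd
    have C : (FQ n).Coloring (ZMod 2) := by
      refine SimpleGraph.Coloring.mk (fun u => ∑ i, u i) ?_
      intro u v hadj
      rw [FQ, SimpleGraph.fromRel_adj] at hadj
      obtain ⟨hne, hd⟩ := hadj
      have hd' : hammingDist u v = 1 ∨ hammingDist u v = n := by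
        rcases hd with h | h
        · exact h
        · rwa [hammingDist_comm]
      have hcast : ((hammingDist u v : ℕ) : ZMod 2) = 1 := by
        have hodd2 : hammingDist u v % 2 = 1 := by
          rcases hd' with h | h
          · rw [h]
          · rw [h]; exact Nat.odd_iff.mp hodd
        rw [← ZMod.natCast_mod _ 2, hodd2, Nat.cast_one]
      intro h
      have h' : (∑ i, u i) = ∑ i, v i := h
      have := sum_sub_eq_hamming u v
      rw [h', sub_self, hcast] at this
      exact one_ne_zero this.symm
    have := C.colorable
    simpa using this
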